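/- There exist absolute constants C, c > 0 such that the following holds for every integer n ≥ 3. Let x₁,…,xₙ be distinct points in ℝ^d and let g ∈ ℝ^d be a standard Gaussian vector (g ∼ N(0, I_d)). Then with probability at least 1 − C/log n over g, every pair i ≠ j satisfies ‖xᵢ − xⱼ‖₂/(n²·log n) ≤ |⟨g, xᵢ − xⱼ⟩| ≤ C·√(log n)·‖xᵢ − xⱼ‖₂. -/

import Mathlib

set_option maxHeartbeats 1000000

open Finset MeasureTheory ProbabilityTheory Real
open scoped NNReal ENNReal


lemma pdf_mul_pdf {a b : ℝ≥0} (ha : a ≠ 0) (hb : b ≠ 0) (z x : ℝ) :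
    gaussianPDFReal 0 a x * gaussianPDFReal z b x
      = gaussianPDFReal 0 (a + b) z * gaussianPDFReal ((a : ℝ) * z / (a + b)) (a * b / (a + b)) x := by
  have hA : 0 < (a : ℝ) := by positivity
  have hB : 0 < (b : ℝ) := by positivity
  have hAB : 0 < (a : ℝ) + b := by positivity
  have hpi : (0:ℝ) < π := Real.pi_pos
  have hcoe : ((a * b / (a + b) : ℝ≥0) : ℝ) = (a : ℝ) * b / ((a:ℝ) + b) := by
    push_cast
    ring
  have hcoe2 : ((a + b : ℝ≥0) : ℝ) = (a : ℝ) + b := by push_cast; ring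
  simp only [gaussianPDFReal, hcoe, hcoe2]
  rw [mul_mul_mul_comm, mul_mul_mul_comm ((√(2 * π * ((a:ℝ)+b)))⁻¹), ← Real.exp_add, ← Real.exp_add]
  congr 1
  · rw [← mul_inv, ← mul_inv, ← Real.sqrt_mul (by positivity), ← Real.sqrt_mul (by positivity)]
    congr 1
    field_simp
  · congr 1
    field_simp
    ring


lemma pdf_symm (b : ℝ≥0) (x z : ℝ) : gaussianPDFReal x b z = gaussianPDFReal z b x := by
  simp only [gaussianPDFReal]
  rw [show (z - x)^2 = (x - z)^2 by ring]

lemma measurable_pdf2 (b : ℝ≥0) : Measurable (fun p : ℝ × ℝ => gaussianPDF p.1 b p.2) := by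
  apply ENNReal.measurable_ofReal.comp
  apply Continuous.measurable
  simp only [gaussianPDFReal]
  fun_prop

lemma gaussian_conv (a b : ℝ≥0) :
    ((gaussianReal 0 a).prod (gaussianReal 0 b)).map (fun p : ℝ × ℝ => p.1 + p.2)
      = gaussianReal 0 (a + b) := by
  by_cases ha : a = 0
  · subst ha
    rw [gaussianReal_zero_var, Measure.dirac_prod,
      Measure.map_map measurable_add measurable_prodMk_left]
    simp [Function.comp_def]
  by_cases hb : b = 0
  · subst hb
    rw [gaussianReal_zero_var, Measure.prod_dirac,
      Measure.map_map measurable_add measurable_prodMk_right]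
    simp [Function.comp_def]
  have hab : a + b ≠ 0 := by simp [ha]
  have hw : (a * b / (a + b) : ℝ≥0) ≠ 0 := by
    simp only [ne_eq, div_eq_zero_iff, mul_eq_zero, not_or]
    exact ⟨⟨ha, hb⟩, hab⟩
  ext s hs
  rw [Measure.map_apply measurable_add hs, Measure.prod_apply (hs.preimage measurable_add)]
  have hslice : ∀ x : ℝ, gaussianReal 0 b (Prod.mk x ⁻¹' ((fun p : ℝ × ℝ => p.1 + p.2) ⁻¹' s))
      = ∫⁻ z in s, gaussianPDF x b z := by
    intro x
    have : Prod.mk x ⁻¹' ((fun p : ℝ × ℝ => p.1 + p.2) ⁻¹' s) = (fun y => x + y) ⁻¹' s := rfl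
    rw [this, ← Measure.map_apply (by fun_prop) hs, gaussianReal_map_const_add x, zero_add,
      gaussianReal_apply x hb s]
  simp_rw [hslice]
  rw [gaussianReal_of_var_ne_zero 0 ha,
    lintegral_withDensity_eq_lintegral_mul _ (measurable_gaussianPDF 0 a)
      ((measurable_pdf2 b).lintegral_prod_right')]
  simp only [Pi.mul_apply]
  have hrw : ∀ x : ℝ, gaussianPDF 0 a x * ∫⁻ z in s, gaussianPDF x b z
      = ∫⁻ z in s, gaussianPDF 0 a x * gaussianPDF x b z := by
    intro x
    exact (lintegral_const_mul _ (measurable_gaussianPDF x b)).symm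
  simp_rw [hrw]
  rw [lintegral_lintegral_swap]
  swap
  · exact ((measurable_gaussianPDF 0 a).comp measurable_fst |>.mul (measurable_pdf2 b)).aemeasurable
  have hinner : ∀ z : ℝ, (∫⁻ x, gaussianPDF 0 a x * gaussianPDF x b z)
      = gaussianPDF 0 (a + b) z := by
    intro z
    have hpt : ∀ x : ℝ, gaussianPDF 0 a x * gaussianPDF x b z
        = gaussianPDF 0 (a + b) z * gaussianPDF ((a : ℝ) * z / (a + b)) (a * b / (a + b)) x := by
      intro x
      simp only [gaussianPDF]
      rw [← ENNReal.ofReal_mul (gaussianPDFReal_nonneg _ _ _),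
        ← ENNReal.ofReal_mul (gaussianPDFReal_nonneg _ _ _), pdf_symm b x z,
        pdf_mul_pdf ha hb z x]
    simp_rw [hpt]
    rw [lintegral_const_mul _ (measurable_gaussianPDF _ _),
      lintegral_gaussianPDF_eq_one _ hw, mul_one]
  simp_rw [hinner]
  rw [← gaussianReal_apply 0 hab s]


lemma gaussian_dot (d : ℕ) (v : Fin d → ℝ) :
    (Measure.pi fun _ : Fin d => gaussianReal 0 1).map (fun g => ∑ k, g k * v k)
      = gaussianReal 0 (∑ k, (⟨(v k) ^ 2, sq_nonneg _⟩ : ℝ≥0)) := by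
  induction d with
  | zero =>
      simp only [Finset.univ_eq_empty, Finset.sum_empty]
      rw [Measure.map_const]
      simp
      exact (gaussianReal_zero_var 0).symm
  | succ n ih =>
      have hmp := measurePreserving_piFinSuccAbove (fun _ : Fin (n + 1) => gaussianReal 0 1) 0
      set e := MeasurableEquiv.piFinSuccAbove (fun _ : Fin (n + 1) => ℝ) 0 with he
      have hcomp : (fun g : Fin (n + 1) → ℝ => ∑ k, g k * v k)
          = (fun p : ℝ × (Fin n → ℝ) => p.1 * v 0 + ∑ k, p.2 k * v k.succ) ∘ e := by
        funext g
        simp only [Function.comp_apply, he, MeasurableEquiv.piFinSuccAbove_apply,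
          Fin.insertNthEquiv, Equiv.coe_fn_symm_mk, Fin.removeNth]
        rw [Fin.sum_univ_succ]
        simp [Fin.succAbove_zero, Fin.tail]
      rw [hcomp, ← Measure.map_map (by fun_prop) e.measurable, hmp.map_eq]
      have hsplit : (fun p : ℝ × (Fin n → ℝ) => p.1 * v 0 + ∑ k, p.2 k * v k.succ)
          = (fun q : ℝ × ℝ => q.1 + q.2) ∘
            (Prod.map (fun y : ℝ => y * v 0) (fun h : Fin n → ℝ => ∑ k, h k * v k.succ)) := by
        funext p; rfl
      rw [hsplit, ← Measure.map_map measurable_add (by fun_prop),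
        ← Measure.map_prod_map _ _ (by fun_prop) (by fun_prop),
        gaussianReal_map_mul_const (v 0), ih, mul_zero, mul_one, gaussian_conv]
      congr 1
      exact (Fin.sum_univ_succ (fun k => (⟨(v k) ^ 2, sq_nonneg _⟩ : ℝ≥0))).symm


lemma gaussian_small_ball {V : ℝ≥0} (hV : V ≠ 0) {a : ℝ} (ha : 0 ≤ a) :
    gaussianReal 0 V {y : ℝ | |y| ≤ a} ≤ ENNReal.ofReal (2 * a * (Real.sqrt (2 * π * V))⁻¹) := by
  have hset : {y : ℝ | |y| ≤ a} = Set.Icc (-a) a := by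
    ext y; simp [abs_le]
  rw [gaussianReal_apply 0 hV, hset]
  have hbd : ∀ y ∈ Set.Icc (-a) a, gaussianPDF 0 V y ≤ ENNReal.ofReal ((Real.sqrt (2 * π * V))⁻¹) := by
    intro y _
    refine ENNReal.ofReal_le_ofReal ?_
    unfold gaussianPDFReal
    have : rexp (-(y - 0) ^ 2 / (2 * V)) ≤ 1 := by
      rw [Real.exp_le_one_iff]
      apply div_nonpos_of_nonpos_of_nonneg
      · nlinarith [sq_nonneg (y - 0)]
      · positivity
    calc (√(2 * π * (V:ℝ)))⁻¹ * rexp (-(y - 0) ^ 2 / (2 * V))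
        ≤ (√(2 * π * (V:ℝ)))⁻¹ * 1 := by
          apply mul_le_mul_of_nonneg_left this
          positivity
      _ = (√(2 * π * (V:ℝ)))⁻¹ := mul_one _
  calc ∫⁻ y in Set.Icc (-a) a, gaussianPDF 0 V y
      ≤ ∫⁻ _ in Set.Icc (-a) a, ENNReal.ofReal ((Real.sqrt (2 * π * V))⁻¹) :=
        setLIntegral_mono (by fun_prop) hbd
    _ = ENNReal.ofReal ((Real.sqrt (2 * π * V))⁻¹) * volume (Set.Icc (-a) a) := by
        rw [setLIntegral_const]
    _ ≤ ENNReal.ofReal (2 * a * (Real.sqrt (2 * π * V))⁻¹) := by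
        rw [Real.volume_Icc, ← ENNReal.ofReal_mul (by positivity)]
        refine ENNReal.ofReal_le_ofReal (le_of_eq ?_)
        ring


lemma gaussian_mgf {V : ℝ≥0} (hV : V ≠ 0) (t : ℝ) :
    ∫⁻ y, ENNReal.ofReal (rexp (t * y)) ∂(gaussianReal 0 V) = ENNReal.ofReal (rexp (t ^ 2 * V / 2)) := by
  have hVpos : 0 < (V : ℝ) := by positivity
  rw [gaussianReal_of_var_ne_zero 0 hV,
    lintegral_withDensity_eq_lintegral_mul _ (measurable_gaussianPDF 0 V)
      (by fun_prop)]
  have hpt : ∀ y : ℝ, (gaussianPDF 0 V * fun y => ENNReal.ofReal (rexp (t * y))) y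
      = ENNReal.ofReal (rexp (t ^ 2 * V / 2)) * gaussianPDF (t * V) V y := by
    intro y
    simp only [Pi.mul_apply, gaussianPDF, ← ENNReal.ofReal_mul (gaussianPDFReal_nonneg _ _ _),
      ← ENNReal.ofReal_mul (Real.exp_nonneg _)]
    congr 1
    unfold gaussianPDFReal
    have hexp : -(y - 0) ^ 2 / (2 * (V:ℝ)) + t * y
        = t ^ 2 * V / 2 + -(y - t * V) ^ 2 / (2 * (V:ℝ)) := by
      field_simp
      ring
    rw [mul_assoc ((√(2 * π * (V:ℝ)))⁻¹), ← Real.exp_add, hexp, Real.exp_add]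
    ring
  simp_rw [hpt]
  rw [lintegral_const_mul _ (measurable_gaussianPDF _ _), lintegral_gaussianPDF_eq_one _ hV, mul_one]

lemma gaussian_tail_right {V : ℝ≥0} (hV : V ≠ 0) {b : ℝ} (hb : 0 ≤ b) :
    gaussianReal 0 V {y : ℝ | b ≤ y} ≤ ENNReal.ofReal (rexp (-(b ^ 2) / (2 * V))) := by
  have hVpos : 0 < (V : ℝ) := by positivity
  set t : ℝ := b / V with ht
  have htpos : 0 ≤ t := by positivity
  have hmeas : MeasurableSet {y : ℝ | b ≤ y} := measurableSet_le measurable_const measurable_id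
  have key : gaussianReal 0 V {y : ℝ | b ≤ y}
      ≤ ∫⁻ y, ENNReal.ofReal (rexp (-(t * b)) * rexp (t * y)) ∂(gaussianReal 0 V) := by
    rw [← lintegral_indicator_one hmeas]
    refine lintegral_mono fun y => ?_
    by_cases hy : y ∈ {y : ℝ | b ≤ y}
    · rw [Set.indicator_of_mem hy]
      rw [← Real.exp_add]
      refine (ENNReal.one_le_ofReal).2 ?_
      rw [← Real.exp_zero]
      apply Real.exp_le_exp.2
      have : b ≤ y := hy
      nlinarith
    · rw [Set.indicator_of_notMem hy]
      exact zero_le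
  refine key.trans ?_
  have : ∀ y : ℝ, ENNReal.ofReal (rexp (-(t * b)) * rexp (t * y))
      = ENNReal.ofReal (rexp (-(t * b))) * ENNReal.ofReal (rexp (t * y)) :=
    fun y => ENNReal.ofReal_mul (Real.exp_nonneg _)
  simp_rw [this]
  rw [lintegral_const_mul _ (by fun_prop), gaussian_mgf hV t, ← ENNReal.ofReal_mul (Real.exp_nonneg _),
    ← Real.exp_add]
  refine ENNReal.ofReal_le_ofReal (Real.exp_le_exp.2 (le_of_eq ?_))
  rw [ht]
  field_simp
  ring

lemma gaussian_neg_map {V : ℝ≥0} :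
    (gaussianReal 0 V).map (fun y => -y) = gaussianReal 0 V := by
  have h1 : ((⟨(-1:ℝ)^2, sq_nonneg _⟩ : ℝ≥0)) = 1 := by ext; norm_num
  have h := gaussianReal_map_const_mul (μ := 0) (v := V) (-1)
  rw [show NNReal.mk ((-1:ℝ)^2) (sq_nonneg _) * V = V by ext; simp, mul_zero] at h
  simpa using h

lemma gaussian_tail_abs {V : ℝ≥0} (hV : V ≠ 0) {b : ℝ} (hb : 0 ≤ b) :
    gaussianReal 0 V {y : ℝ | b < |y|} ≤ 2 * ENNReal.ofReal (rexp (-(b ^ 2) / (2 * V))) := by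
  have hsub : {y : ℝ | b < |y|} ⊆ {y : ℝ | b ≤ y} ∪ {y : ℝ | y ≤ -b} := by
    intro y hy
    simp only [Set.mem_setOf_eq, Set.mem_union] at *
    rcases abs_cases y with ⟨h1, _⟩ | ⟨h1, _⟩
    · left; linarith
    · right; linarith
  have hleft : gaussianReal 0 V {y : ℝ | y ≤ -b} ≤ ENNReal.ofReal (rexp (-(b ^ 2) / (2 * V))) := by
    have hmeas : MeasurableSet {y : ℝ | b ≤ y} := measurableSet_le measurable_const measurable_id
    have : gaussianReal 0 V {y : ℝ | y ≤ -b} = (gaussianReal 0 V).map (fun y => -y) {y : ℝ | b ≤ y} := by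
      rw [Measure.map_apply measurable_neg hmeas]
      congr 1
      ext y
      simp only [Set.mem_setOf_eq, Set.mem_preimage]
      constructor <;> intro h <;> linarith
    rw [this, gaussian_neg_map]
    exact gaussian_tail_right hV hb
  calc gaussianReal 0 V {y : ℝ | b < |y|}
      ≤ gaussianReal 0 V ({y : ℝ | b ≤ y} ∪ {y : ℝ | y ≤ -b}) := measure_mono hsub
    _ ≤ gaussianReal 0 V {y : ℝ | b ≤ y} + gaussianReal 0 V {y : ℝ | y ≤ -b} := measure_union_le _ _
    _ ≤ ENNReal.ofReal (rexp (-(b ^ 2) / (2 * V))) + ENNReal.ofReal (rexp (-(b ^ 2) / (2 * V))) :=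
        add_le_add (gaussian_tail_right hV hb) hleft
    _ = 2 * ENNReal.ofReal (rexp (-(b ^ 2) / (2 * V))) := (two_mul _).symm


lemma pair_bound {n : ℕ} (hn : 3 ≤ n) (d : ℕ) (v : Fin d → ℝ) (hv : v ≠ 0) :
    (Measure.pi fun _ : Fin d => gaussianReal 0 1)
      {g : Fin d → ℝ | ¬ (Real.sqrt (∑ k, (v k) ^ 2) / ((n : ℝ) ^ 2 * Real.log n) ≤
            |∑ k, g k * v k| ∧
          |∑ k, g k * v k| ≤ 3 * Real.sqrt (Real.log n) * Real.sqrt (∑ k, (v k) ^ 2))}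
      ≤ ENNReal.ofReal (1 / ((n : ℝ) ^ 2 * Real.log n) + 2 * rexp (-(9 / 2) * Real.log n)) := by
  set L := Real.log n with hLdef
  have hL1 : 1 < L := by
    rw [hLdef, show (1:ℝ) = Real.log (Real.exp 1) by rw [Real.log_exp]]
    apply Real.log_lt_log (Real.exp_pos 1)
    calc Real.exp 1 < 2.7182818286 := Real.exp_one_lt_d9
      _ < 3 := by norm_num
      _ ≤ (n : ℝ) := by exact_mod_cast hn
  have hL0 : 0 < L := by linarith
  have hn0 : (0:ℝ) < (n : ℝ) ^ 2 * L := by positivity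
  set V : ℝ≥0 := ∑ k, (⟨(v k) ^ 2, sq_nonneg _⟩ : ℝ≥0) with hVdef
  have hVcoe : (V : ℝ) = ∑ k, (v k) ^ 2 := by
    erw [hVdef, NNReal.coe_sum]
    rfl
  have hVne : V ≠ 0 := by
    obtain ⟨k0, hk0⟩ := Function.ne_iff.1 hv
    have hk0' : v k0 ≠ 0 := by simpa using hk0
    intro h
    have h0 : (V : ℝ) = 0 := by rw [h]; simp
    rw [hVcoe] at h0
    have hle : (v k0) ^ 2 ≤ ∑ k, (v k) ^ 2 :=
      Finset.single_le_sum (f := fun k => (v k) ^ 2) (fun k _ => sq_nonneg _) (mem_univ k0)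
    have hpos : 0 < (v k0) ^ 2 := by positivity
    linarith
  have hVpos : 0 < (V : ℝ) := by positivity
  set σ : ℝ := Real.sqrt (∑ k, (v k) ^ 2) with hσdef
  have hσV : σ = Real.sqrt V := by rw [hσdef, hVcoe]
  have hσpos : 0 < σ := by rw [hσV]; exact Real.sqrt_pos.2 hVpos
  set a : ℝ := σ / ((n : ℝ) ^ 2 * L) with hadef
  set b : ℝ := 3 * Real.sqrt L * σ with hbdef
  have ha0 : 0 ≤ a := by positivity
  have hb0 : 0 ≤ b := by positivity
  have hZ : Measurable fun g : Fin d → ℝ => ∑ k, g k * v k :=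
    Finset.univ.measurable_sum fun k _ => (measurable_pi_apply k).mul_const _
  have hmap := gaussian_dot d v
  have hsub : {g : Fin d → ℝ | ¬ (a ≤ |∑ k, g k * v k| ∧ |∑ k, g k * v k| ≤ b)}
      ⊆ ((fun g : Fin d → ℝ => ∑ k, g k * v k) ⁻¹' {y : ℝ | |y| ≤ a})
        ∪ ((fun g : Fin d → ℝ => ∑ k, g k * v k) ⁻¹' {y : ℝ | b < |y|}) := by
    intro g hg
    simp only [Set.mem_setOf_eq, not_and_or, not_le] at hg
    rcases hg with h | h
    · left; exact le_of_lt h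
    · right; exact h
  calc (Measure.pi fun _ : Fin d => gaussianReal 0 1)
        {g : Fin d → ℝ | ¬ (a ≤ |∑ k, g k * v k| ∧ |∑ k, g k * v k| ≤ b)}
      ≤ (Measure.pi fun _ : Fin d => gaussianReal 0 1)
          (((fun g : Fin d → ℝ => ∑ k, g k * v k) ⁻¹' {y : ℝ | |y| ≤ a})
            ∪ ((fun g : Fin d → ℝ => ∑ k, g k * v k) ⁻¹' {y : ℝ | b < |y|})) :=
        measure_mono hsub
    _ ≤ (Measure.pi fun _ : Fin d => gaussianReal 0 1)
          ((fun g : Fin d → ℝ => ∑ k, g k * v k) ⁻¹' {y : ℝ | |y| ≤ a})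
        + (Measure.pi fun _ : Fin d => gaussianReal 0 1)
          ((fun g : Fin d → ℝ => ∑ k, g k * v k) ⁻¹' {y : ℝ | b < |y|}) := measure_union_le _ _
    _ = gaussianReal 0 V {y : ℝ | |y| ≤ a} + gaussianReal 0 V {y : ℝ | b < |y|} := by
        rw [← Measure.map_apply hZ ((isClosed_le continuous_abs continuous_const).measurableSet),
          ← Measure.map_apply hZ ((isOpen_lt continuous_const continuous_abs).measurableSet), hmap]
    _ ≤ ENNReal.ofReal (2 * a * (Real.sqrt (2 * π * V))⁻¹)
        + 2 * ENNReal.ofReal (rexp (-(b ^ 2) / (2 * V))) :=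
        add_le_add (gaussian_small_ball hVne ha0) (gaussian_tail_abs hVne hb0)
    _ ≤ ENNReal.ofReal (1 / ((n : ℝ) ^ 2 * L)) + 2 * ENNReal.ofReal (rexp (-(9 / 2) * L)) := by
        refine add_le_add (ENNReal.ofReal_le_ofReal ?_) (mul_le_mul_right (ENNReal.ofReal_le_ofReal ?_) 2)
        · have hsqrt2pi : 2 ≤ Real.sqrt (2 * π) := by
            have h4 : (2:ℝ) = Real.sqrt 4 := by
              rw [show (4:ℝ) = 2 ^ 2 by norm_num, Real.sqrt_sq (by norm_num : (0:ℝ) ≤ 2)]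
            calc (2:ℝ) = Real.sqrt 4 := h4
              _ ≤ Real.sqrt (2 * π) := Real.sqrt_le_sqrt (by nlinarith [Real.pi_gt_three])
          have h1 : Real.sqrt (2 * π * V) = Real.sqrt (2 * π) * Real.sqrt V := by
            rw [Real.sqrt_mul (by positivity)]
          have hsv : 0 < Real.sqrt (V:ℝ) := Real.sqrt_pos.2 hVpos
          have h2π : 0 < Real.sqrt (2*π) := by positivity
          have key : 2 * a * (Real.sqrt (2 * π * (V:ℝ)))⁻¹
              = (2 / Real.sqrt (2*π)) * (1 / ((n:ℝ)^2 * L)) := by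
            rw [hadef, h1, hσV]
            field_simp
          rw [key]
          have h21 : 2 / Real.sqrt (2*π) ≤ 1 := by
            rw [div_le_one h2π]
            exact hsqrt2pi
          nlinarith [one_div_pos.2 hn0]
        · have hbsq : b ^ 2 = 9 * L * V := by
            rw [hbdef, hσV, mul_pow, mul_pow, Real.sq_sqrt hL0.le, Real.sq_sqrt hVpos.le]
            norm_num
          rw [hbsq]
          apply Real.exp_le_exp.2
          rw [div_le_iff₀ (by positivity)]
          ring_nf
          nlinarith [hVpos, hL0]
    _ ≤ ENNReal.ofReal (1 / ((n : ℝ) ^ 2 * L) + 2 * rexp (-(9 / 2) * L)) := by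
        rw [ENNReal.ofReal_add (by positivity) (by positivity), ENNReal.ofReal_mul (by norm_num : (0:ℝ) ≤ 2)]
        simp [ENNReal.ofReal_ofNat]



/-- for a standard Gaussian `g ∼ N(0, I_d)`, with probability at least
`1 − C/log n`, every pair of distinct points satisfies
`‖xᵢ − xⱼ‖₂/(n²·log n) ≤ |⟨g, xᵢ − xⱼ⟩| ≤ C·√(log n)·‖xᵢ − xⱼ‖₂`. -/
theorem gaussian_projection_bilipschitz :
    ∃ C c : ℝ, 0 < C ∧ 0 < c ∧
    ∀ (n : ℕ), 3 ≤ n →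
    ∀ (d : ℕ) (x : Fin n → Fin d → ℝ), Function.Injective x →
    ENNReal.ofReal (1 - C / Real.log n) ≤
      (Measure.pi fun _ : Fin d => gaussianReal 0 1)
        {g : Fin d → ℝ | ∀ i j : Fin n, i ≠ j →
          Real.sqrt (∑ k, (x i k - x j k) ^ 2) / ((n : ℝ) ^ 2 * Real.log n) ≤
              |∑ k, g k * (x i k - x j k)| ∧
            |∑ k, g k * (x i k - x j k)| ≤
              C * Real.sqrt (Real.log n) * Real.sqrt (∑ k, (x i k - x j k) ^ 2)} := by
  refine ⟨3, 1, by norm_num, by norm_num, ?_⟩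
  intro n hn d x hx
  set μ := Measure.pi fun _ : Fin d => gaussianReal 0 1 with hμ
  set L := Real.log n with hLdef
  have hn3 : (3:ℝ) ≤ (n:ℝ) := by exact_mod_cast hn
  have hL1 : 1 < L := by
    rw [hLdef, show (1:ℝ) = Real.log (Real.exp 1) by rw [Real.log_exp]]
    apply Real.log_lt_log (Real.exp_pos 1)
    calc Real.exp 1 < 2.7182818286 := Real.exp_one_lt_d9
      _ < 3 := by norm_num
      _ ≤ (n : ℝ) := hn3
  have hL0 : 0 < L := by linarith
  set εp : ℝ := 1 / ((n : ℝ) ^ 2 * L) + 2 * rexp (-(9 / 2) * L) with hεp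
  have hεp0 : 0 ≤ εp := by positivity
  set S := {g : Fin d → ℝ | ∀ i j : Fin n, i ≠ j →
          Real.sqrt (∑ k, (x i k - x j k) ^ 2) / ((n : ℝ) ^ 2 * L) ≤
              |∑ k, g k * (x i k - x j k)| ∧
            |∑ k, g k * (x i k - x j k)| ≤
              3 * Real.sqrt L * Real.sqrt (∑ k, (x i k - x j k) ^ 2)} with hS
  set U : Fin n → Fin n → Set (Fin d → ℝ) := fun i j =>
    {g | i ≠ j ∧ ¬ (Real.sqrt (∑ k, (x i k - x j k) ^ 2) / ((n : ℝ) ^ 2 * L) ≤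
              |∑ k, g k * (x i k - x j k)| ∧
            |∑ k, g k * (x i k - x j k)| ≤
              3 * Real.sqrt L * Real.sqrt (∑ k, (x i k - x j k) ^ 2))} with hU
  have hcover : (Set.univ : Set (Fin d → ℝ)) ⊆ S ∪ ⋃ i, ⋃ j, U i j := by
    intro g _
    by_cases hg : g ∈ S
    · exact Set.mem_union_left _ hg
    · right
      rw [hS] at hg
      simp only [Set.mem_setOf_eq, not_forall] at hg
      obtain ⟨i, j, hij, hP⟩ := hg
      exact Set.mem_iUnion.2 ⟨i, Set.mem_iUnion.2 ⟨j, ⟨hij, hP⟩⟩⟩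
  have hUbound : ∀ i j, μ (U i j) ≤ ENNReal.ofReal εp := by
    intro i j
    by_cases hij : i = j
    · have : U i j = ∅ := by
        rw [hU]
        ext g
        simp [hij]
      rw [this]
      simp
    · have hv : (fun k => x i k - x j k) ≠ 0 := by
        intro h
        apply hij
        apply hx
        funext k
        have := congrFun h k
        simpa [sub_eq_zero] using this
      have hsub : U i j ⊆ {g : Fin d → ℝ |
          ¬ (Real.sqrt (∑ k, ((fun k => x i k - x j k) k) ^ 2) / ((n : ℝ) ^ 2 * Real.log n) ≤
            |∑ k, g k * ((fun k => x i k - x j k) k)| ∧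
          |∑ k, g k * ((fun k => x i k - x j k) k)| ≤
            3 * Real.sqrt (Real.log n) * Real.sqrt (∑ k, ((fun k => x i k - x j k) k) ^ 2))} := by
        intro g hg
        exact hg.2
      exact (measure_mono hsub).trans (pair_bound hn d _ hv)
  have hsum : μ (⋃ i, ⋃ j, U i j) ≤ ENNReal.ofReal ((n:ℝ)^2 * εp) := by
    calc μ (⋃ i, ⋃ j, U i j) ≤ ∑ i, μ (⋃ j, U i j) := measure_iUnion_fintype_le _ _
      _ ≤ ∑ i : Fin n, ∑ j : Fin n, μ (U i j) :=
          Finset.sum_le_sum fun i _ => measure_iUnion_fintype_le _ _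
      _ ≤ ∑ _i : Fin n, ∑ _j : Fin n, ENNReal.ofReal εp :=
          Finset.sum_le_sum fun i _ => Finset.sum_le_sum fun j _ => hUbound i j
      _ = (n : ℝ≥0∞) * ((n : ℝ≥0∞) * ENNReal.ofReal εp) := by
          simp [Finset.sum_const, mul_assoc]
      _ = ENNReal.ofReal ((n:ℝ)^2 * εp) := by
          rw [← ENNReal.ofReal_natCast n, ← ENNReal.ofReal_mul (by positivity),
            ← ENNReal.ofReal_mul (by positivity)]
          congr 1
          ring
  have hreal : (n:ℝ)^2 * εp ≤ 3 / L := by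
    have hexp : rexp (-(9 / 2) * L) ≤ ((n:ℝ)^2)⁻¹ * ((n:ℝ)^2)⁻¹ := by
      have h1 : rexp (-(9 / 2) * L) ≤ rexp (-(4:ℝ) * L) := by
        apply Real.exp_le_exp.2
        nlinarith
      have h2 : rexp (-(4:ℝ) * L) = ((n:ℝ)^4)⁻¹ := by
        rw [hLdef, show (-(4:ℝ) * Real.log n) = Real.log ((n:ℝ)^4) * (-1) by
          rw [Real.log_pow]; push_cast; ring]
        rw [Real.exp_mul, Real.exp_log (by positivity), Real.rpow_neg_one]
      rw [h2] at h1
      refine h1.trans (le_of_eq ?_)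
      rw [← mul_inv]
      congr 1
      ring
    have hLn : L ≤ (n:ℝ)^2 := by
      calc L ≤ (n:ℝ) - 1 := by
            rw [hLdef]; exact Real.log_le_sub_one_of_pos (by positivity)
        _ ≤ (n:ℝ)^2 := by nlinarith
    have hn2 : (0:ℝ) < (n:ℝ)^2 := by positivity
    have key : (n:ℝ)^2 * εp = 1 / L + (n:ℝ)^2 * (2 * rexp (-(9 / 2) * L)) := by
      rw [hεp]
      field_simp
    rw [key]
    have : (n:ℝ)^2 * (2 * rexp (-(9 / 2) * L)) ≤ 2 / L := by
      calc (n:ℝ)^2 * (2 * rexp (-(9 / 2) * L))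
          ≤ (n:ℝ)^2 * (2 * (((n:ℝ)^2)⁻¹ * ((n:ℝ)^2)⁻¹)) := by
            apply mul_le_mul_of_nonneg_left _ (by positivity)
            apply mul_le_mul_of_nonneg_left hexp (by norm_num)
        _ = 2 * ((n:ℝ)^2)⁻¹ := by field_simp
        _ ≤ 2 / L := by
            rw [div_eq_mul_inv]
            apply mul_le_mul_of_nonneg_left _ (by norm_num)
            exact inv_anti₀ hL0 hLn
    have h1L : (1:ℝ)/L + 2/L = 3/L := by field_simp; ring
    linarith
  have h1 : (1:ℝ≥0∞) ≤ μ S + ENNReal.ofReal ((n:ℝ)^2 * εp) := by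
    calc (1:ℝ≥0∞) = μ Set.univ := measure_univ.symm
      _ ≤ μ (S ∪ ⋃ i, ⋃ j, U i j) := measure_mono hcover
      _ ≤ μ S + μ (⋃ i, ⋃ j, U i j) := measure_union_le _ _
      _ ≤ μ S + ENNReal.ofReal ((n:ℝ)^2 * εp) := add_le_add_right hsum _
  have hfinal : ENNReal.ofReal (1 - 3 / L) ≤ μ S := by
    rw [ENNReal.ofReal_sub _ (by positivity), ENNReal.ofReal_one]
    rw [tsub_le_iff_right]
    calc (1:ℝ≥0∞) ≤ μ S + ENNReal.ofReal ((n:ℝ)^2 * εp) := h1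
      _ ≤ μ S + ENNReal.ofReal (3 / L) := add_le_add_right (ENNReal.ofReal_le_ofReal hreal) _
  exact hfinal
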